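/- Let a, b ≥ 0 be real numbers and let f : ℝ² → ℝ be differentiable and Lebesgue integrable with ‖∇f(x)‖ ≤ a + b‖x‖ for all x ∈ ℝ², where ‖·‖ is the Euclidean norm. Then for every Δ > 0 and every finite set S ⊆ ℤ², Σ_{n ∈ S} [ Δ²·|f(Δ·n)| − (Δ³/√2)·(a + b·Δ·‖n‖) − (b/2)·Δ⁴ ] ≤ ∫_{ℝ²} |f(x)| dx. -/

import Mathlib

open MeasureTheory

/-- The grid point `Δ·n ∈ ℝ²` associated with an integer pair `n ∈ ℤ²`. -/
noncomputable def gridPt (Δ : ℝ) (n : Fin 2 → ℤ) : EuclideanSpace ℝ (Fin 2) :=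
  WithLp.toLp 2 (fun i => Δ * (n i : ℝ))

/-- The integer pair `n ∈ ℤ²` viewed as a point of `ℝ²`. -/
noncomputable def intPt (n : Fin 2 → ℤ) : EuclideanSpace ℝ (Fin 2) :=
  WithLp.toLp 2 (fun i => (n i : ℝ))

/-- Norm of gradient equals norm of the Fréchet derivative. -/
lemma norm_gradient_eq_norm_fderiv {F : Type*} [NormedAddCommGroup F]
    [InnerProductSpace ℝ F] [CompleteSpace F] (f : F → ℝ) (x : F) :
    ‖gradient f x‖ = ‖fderiv ℝ f x‖ := by
  rw [gradient]
  exact LinearIsometryEquiv.norm_map _ _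

/-- **Paper's Proposition 6 (rigorous grid discretization bound).**
If `f : ℝ² → ℝ` is differentiable and integrable with `‖∇f(x)‖ ≤ a + b‖x‖`, then for
any grid spacing `Δ > 0` and finite `S ⊆ ℤ²`,
`∑_{n ∈ S} [Δ²|f(Δn)| − (Δ³/√2)(a + bΔ‖n‖) − (b/2)Δ⁴] ≤ ∫_{ℝ²} |f|`. -/
theorem stmt14 (a b : ℝ) (ha : 0 ≤ a) (hb : 0 ≤ b)
    (f : EuclideanSpace ℝ (Fin 2) → ℝ) (hf : Differentiable ℝ f)
    (hfi : Integrable f)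
    (hgrad : ∀ x, ‖gradient f x‖ ≤ a + b * ‖x‖)
    (Δ : ℝ) (hΔ : 0 < Δ) (S : Finset (Fin 2 → ℤ)) :
    ∑ n ∈ S, (Δ ^ 2 * |f (gridPt Δ n)|
        - (Δ ^ 3 / Real.sqrt 2) * (a + b * (Δ * ‖intPt n‖))
        - (b / 2) * Δ ^ 4) ≤
      ∫ x, |f x| := by
  have sqrt2_pos : (0:ℝ) < Real.sqrt 2 := Real.sqrt_pos.mpr (by norm_num)
  set r : ℝ := Δ / Real.sqrt 2 with hr_def
  have hr_pos : 0 < r := div_pos hΔ sqrt2_pos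
  have hr_sq : r ^ 2 = Δ ^ 2 / 2 := by
    rw [hr_def, div_pow, Real.sq_sqrt (by norm_num : (2:ℝ) ≥ 0)]
  -- the grid cells
  set Q : (Fin 2 → ℤ) → Set (EuclideanSpace ℝ (Fin 2)) :=
    fun n => {x | ∀ i, x i ∈ Set.Ico (Δ * n i - Δ / 2) (Δ * n i + Δ / 2)} with hQ_def
  -- cells as preimages of pi sets
  have hQ_pre : ∀ n, Q n = (MeasurableEquiv.toLp 2 (Fin 2 → ℝ)).symm ⁻¹'
      (Set.univ.pi fun i => Set.Ico (Δ * n i - Δ / 2) (Δ * n i + Δ / 2)) := by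
    intro n
    ext x
    simp [hQ_def, Set.mem_pi, MeasurableEquiv.toLp_symm_apply]
  have hQ_meas : ∀ n, MeasurableSet (Q n) := by
    intro n
    rw [hQ_pre]
    exact (MeasurableEquiv.toLp 2 (Fin 2 → ℝ)).symm.measurable
      (MeasurableSet.univ_pi fun i => measurableSet_Ico)
  -- volume of each cell
  have hQ_vol : ∀ n, volume (Q n) = ENNReal.ofReal (Δ ^ 2) := by
    intro n
    rw [hQ_pre]
    rw [(EuclideanSpace.volume_preserving_symm_measurableEquiv_toLp (Fin 2)).measure_preimage
      (MeasurableSet.univ_pi fun i => measurableSet_Ico).nullMeasurableSet]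
    rw [volume_pi_pi]
    simp only [Real.volume_Ico]
    have : ∀ i : Fin 2, Δ * (n i : ℝ) + Δ / 2 - (Δ * n i - Δ / 2) = Δ := by intro i; ring
    simp only [this]
    rw [Fin.prod_const, ← ENNReal.ofReal_pow hΔ.le]
  -- distance from a cell point to the cell center
  have hdist : ∀ n, ∀ x ∈ Q n, ‖x - gridPt Δ n‖ ≤ r := by
    intro n x hx
    have h1 : ∀ i, |x i - Δ * n i| ≤ Δ / 2 := by
      intro i
      have := hx i
      simp only [Set.mem_Ico] at this
      rw [abs_le]
      constructor <;> linarith [this.1, this.2]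
    have hnorm : ‖x - gridPt Δ n‖ = Real.sqrt (∑ i, ‖x i - Δ * n i‖ ^ 2) := by
      rw [EuclideanSpace.norm_eq]
      congr 1
    rw [hnorm]
    have hsum : (∑ i, ‖x i - Δ * n i‖ ^ 2) ≤ Δ ^ 2 / 2 := by
      rw [Fin.sum_univ_two]
      have h0 := h1 0
      have h2 := h1 1
      have e0 : ‖x 0 - Δ * n 0‖ ^ 2 ≤ (Δ / 2) ^ 2 := by
        rw [Real.norm_eq_abs]
        exact pow_le_pow_left₀ (abs_nonneg _) h0 2
      have e1 : ‖x 1 - Δ * n 1‖ ^ 2 ≤ (Δ / 2) ^ 2 := by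
        rw [Real.norm_eq_abs]
        exact pow_le_pow_left₀ (abs_nonneg _) h2 2
      nlinarith
    calc Real.sqrt (∑ i, ‖x i - Δ * n i‖ ^ 2) ≤ Real.sqrt (Δ ^ 2 / 2) :=
          Real.sqrt_le_sqrt hsum
      _ = r := by rw [← hr_sq, Real.sqrt_sq hr_pos.le]
  -- pointwise lower bound on each cell
  have hlow : ∀ n, ∀ x ∈ Q n,
      |f (gridPt Δ n)| - (a + b * ‖gridPt Δ n‖) * r - b * r ^ 2 ≤ |f x| := by
    intro n x hx
    set x₀ := gridPt Δ n
    set C := a + b * ‖x₀‖ + b * r with hC_def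
    have hC_nonneg : 0 ≤ C := by positivity
    have hbound : ∀ y ∈ Metric.closedBall x₀ r, ‖fderiv ℝ f y‖ ≤ C := by
      intro y hy
      rw [← norm_gradient_eq_norm_fderiv]
      calc ‖gradient f y‖ ≤ a + b * ‖y‖ := hgrad y
        _ ≤ C := by
            have : ‖y‖ ≤ ‖x₀‖ + r := by
              have := Metric.mem_closedBall.mp hy
              calc ‖y‖ = ‖x₀ + (y - x₀)‖ := by rw [add_sub_cancel]
                _ ≤ ‖x₀‖ + ‖y - x₀‖ := norm_add_le _ _
                _ ≤ ‖x₀‖ + r := by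
                    have : ‖y - x₀‖ = dist y x₀ := by rw [dist_eq_norm]
                    linarith [Metric.mem_closedBall.mp hy, this ▸ Metric.mem_closedBall.mp hy]
            nlinarith
    have hxball : x ∈ Metric.closedBall x₀ r := by
      rw [Metric.mem_closedBall, dist_eq_norm]
      exact hdist n x hx
    have hx₀ball : x₀ ∈ Metric.closedBall x₀ r := Metric.mem_closedBall_self hr_pos.le
    have hmvt : ‖f x - f x₀‖ ≤ C * ‖x - x₀‖ :=
      (convex_closedBall x₀ r).norm_image_sub_le_of_norm_fderiv_le
        (fun y _ => hf.differentiableAt) hbound hx₀ball hxball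
    have h2 : ‖f x - f x₀‖ ≤ C * r :=
      hmvt.trans (mul_le_mul_of_nonneg_left (hdist n x hx) hC_nonneg)
    have h3 : |f x₀| - |f x| ≤ C * r := by
      calc |f x₀| - |f x| ≤ |f x₀ - f x| := abs_sub_abs_le_abs_sub _ _
        _ = ‖f x - f x₀‖ := by rw [Real.norm_eq_abs, abs_sub_comm]
        _ ≤ C * r := h2
    have : C * r = (a + b * ‖x₀‖) * r + b * r ^ 2 := by rw [hC_def]; ring
    linarith [this ▸ h3]
  -- integrability of |f| on each cell
  have hfi_abs : Integrable (fun x => |f x|) := hfi.abs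
  have hIntOn : ∀ n, IntegrableOn (fun x => |f x|) (Q n) := fun n =>
    hfi_abs.integrableOn
  -- per-cell integral bound
  have hcell : ∀ n, Δ ^ 2 * (|f (gridPt Δ n)| - (a + b * ‖gridPt Δ n‖) * r - b * r ^ 2)
      ≤ ∫ x in Q n, |f x| := by
    intro n
    set g : ℝ := |f (gridPt Δ n)| - (a + b * ‖gridPt Δ n‖) * r - b * r ^ 2 with hg_def
    have h1 : ∫ (_ : EuclideanSpace ℝ (Fin 2)) in Q n, g = Δ ^ 2 * g := by
      rw [setIntegral_const, measureReal_def, hQ_vol n, ENNReal.toReal_ofReal (by positivity), smul_eq_mul]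
    calc Δ ^ 2 * g = ∫ (_ : EuclideanSpace ℝ (Fin 2)) in Q n, g := h1.symm
      _ ≤ ∫ x in Q n, |f x| := by
          apply setIntegral_mono_on (integrableOn_const ?_) (hIntOn n) (hQ_meas n)
          · exact fun x hx => hlow n x hx
          · rw [hQ_vol n]; exact ENNReal.ofReal_ne_top
  -- the summand equals Δ² · g
  have hsummand : ∀ n, Δ ^ 2 * |f (gridPt Δ n)|
        - (Δ ^ 3 / Real.sqrt 2) * (a + b * (Δ * ‖intPt n‖))
        - (b / 2) * Δ ^ 4
      = Δ ^ 2 * (|f (gridPt Δ n)| - (a + b * ‖gridPt Δ n‖) * r - b * r ^ 2) := by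
    intro n
    have hnorm : ‖gridPt Δ n‖ = Δ * ‖intPt n‖ := by
      have : gridPt Δ n = Δ • intPt n := by
        ext i
        simp [gridPt, intPt]
      rw [this, norm_smul, Real.norm_eq_abs, abs_of_pos hΔ]
    rw [hnorm, hr_sq, hr_def]
    field_simp
  -- pairwise disjointness of cells
  have hdisj : Set.Pairwise (↑S) (Function.onFun Disjoint Q) := by
    intro m _ n _ hmn
    rw [Function.onFun, Set.disjoint_left]
    intro x hxm hxn
    have : ∃ i, m i ≠ n i := by
      by_contra h
      push_neg at h
      exact hmn (funext h)
    obtain ⟨i, hi⟩ := this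
    have h1 := hxm i
    have h2 := hxn i
    simp only [hQ_def, Set.mem_Ico, Set.mem_setOf_eq] at h1 h2
    have habs : |(m i : ℝ) - (n i : ℝ)| ≥ 1 := by
      have h3 : (1 : ℤ) ≤ |m i - n i| := Int.one_le_abs (sub_ne_zero.mpr hi)
      have h4 : (1 : ℝ) ≤ |((m i - n i : ℤ) : ℝ)| := by exact_mod_cast h3
      push_cast at h4
      linarith
    have hlt : |Δ * (m i : ℝ) - Δ * (n i : ℝ)| < Δ := by
      rw [abs_lt]; constructor <;> nlinarith [h1.1, h1.2, h2.1, h2.2]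
    have key : Δ * |(m i : ℝ) - (n i : ℝ)| = |Δ * (m i : ℝ) - Δ * (n i : ℝ)| := by
      rw [← mul_sub, abs_mul, abs_of_pos hΔ]
    nlinarith [key ▸ hlt]
  -- assemble
  calc ∑ n ∈ S, (Δ ^ 2 * |f (gridPt Δ n)|
        - (Δ ^ 3 / Real.sqrt 2) * (a + b * (Δ * ‖intPt n‖))
        - (b / 2) * Δ ^ 4)
      = ∑ n ∈ S, Δ ^ 2 * (|f (gridPt Δ n)| - (a + b * ‖gridPt Δ n‖) * r - b * r ^ 2) :=
        Finset.sum_congr rfl fun n _ => hsummand n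
    _ ≤ ∑ n ∈ S, ∫ x in Q n, |f x| := Finset.sum_le_sum fun n _ => hcell n
    _ = ∫ x in ⋃ n ∈ S, Q n, |f x| :=
        (integral_biUnion_finset S (fun n _ => hQ_meas n) hdisj (fun n _ => hIntOn n)).symm
    _ ≤ ∫ x, |f x| := setIntegral_le_integral hfi_abs
        (Filter.Eventually.of_forall fun x => abs_nonneg _)
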